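/- The function F : (0,\infty) \to \mathbb{R}, F(r) = \sqrt{r \tanh r}, is strictly concave; equivalently, F''(r) < 0 for all r > 0. -/

import Mathlib

noncomputable def Fsw : ℝ → ℝ := fun r => Real.sqrt (r * Real.tanh r)

open Real

lemma tanh_hasDerivAt (x : ℝ) :
    HasDerivAt Real.tanh (1 - Real.tanh x ^ 2) x := by
  have hc : Real.cosh x ≠ 0 := (Real.cosh_pos x).ne'
  have h : HasDerivAt (fun y : ℝ => Real.sinh y / Real.cosh y)
      ((Real.cosh x * Real.cosh x - Real.sinh x * Real.sinh x) / Real.cosh x ^ 2) x :=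
    (Real.hasDerivAt_sinh x).div (Real.hasDerivAt_cosh x) hc
  have hfun : (fun y : ℝ => Real.sinh y / Real.cosh y) = Real.tanh := by
    funext y; rw [Real.tanh_eq_sinh_div_cosh]
  rw [hfun] at h
  convert h using 1
  have hsq : Real.cosh x ^ 2 - Real.sinh x ^ 2 = 1 := Real.cosh_sq_sub_sinh_sq x
  rw [Real.tanh_eq_sinh_div_cosh]
  field_simp

lemma tanh_pos' {x : ℝ} (hx : 0 < x) : 0 < Real.tanh x := by
  rw [Real.tanh_eq_sinh_div_cosh]
  exact div_pos (Real.sinh_pos_iff.2 hx) (Real.cosh_pos x)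

lemma tanh_lt_one' {x : ℝ} (hx : 0 < x) : Real.tanh x < 1 := by
  rw [Real.tanh_eq_sinh_div_cosh]
  rw [div_lt_one (Real.cosh_pos x)]
  have h1 : Real.cosh x ^ 2 - Real.sinh x ^ 2 = 1 := Real.cosh_sq_sub_sinh_sq x
  have h2 : 0 < Real.sinh x := Real.sinh_pos_iff.2 hx
  nlinarith [Real.cosh_pos x]

/-- first derivative of Fsw -/
noncomputable def Fsw1 : ℝ → ℝ := fun r =>
  (Real.tanh r + r * (1 - Real.tanh r ^ 2)) / (2 * Real.sqrt (r * Real.tanh r))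

lemma g_pos {r : ℝ} (hr : 0 < r) : 0 < r * Real.tanh r :=
  mul_pos hr (tanh_pos' hr)

lemma g_hasDerivAt (r : ℝ) :
    HasDerivAt (fun x : ℝ => x * Real.tanh x)
      (Real.tanh r + r * (1 - Real.tanh r ^ 2)) r := by
  have := (hasDerivAt_id r).mul (tanh_hasDerivAt r)
  exact this.congr_deriv (by simp only [id_eq]; ring)

lemma Fsw_hasDerivAt {r : ℝ} (hr : 0 < r) : HasDerivAt Fsw (Fsw1 r) r := by
  have h := (g_hasDerivAt r).sqrt (g_pos hr).ne'
  exact h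

lemma deriv_Fsw_eq {r : ℝ} (hr : 0 < r) : deriv Fsw r = Fsw1 r :=
  (Fsw_hasDerivAt hr).deriv

lemma Fsw1_hasDerivAt {r : ℝ} (hr : 0 < r) :
    HasDerivAt Fsw1
      (((2 * (1 - Real.tanh r ^ 2) * (1 - r * Real.tanh r)) * (2 * Real.sqrt (r * Real.tanh r))
        - (Real.tanh r + r * (1 - Real.tanh r ^ 2)) *
          (2 * ((Real.tanh r + r * (1 - Real.tanh r ^ 2)) / (2 * Real.sqrt (r * Real.tanh r)))))
        / (2 * Real.sqrt (r * Real.tanh r)) ^ 2) r := by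
  have hs : 0 < Real.sqrt (r * Real.tanh r) := Real.sqrt_pos.2 (g_pos hr)
  -- numerator derivative
  have hN : HasDerivAt (fun x : ℝ => Real.tanh x + x * (1 - Real.tanh x ^ 2))
      (2 * (1 - Real.tanh r ^ 2) * (1 - r * Real.tanh r)) r := by
    have h1 : HasDerivAt (fun x : ℝ => 1 - Real.tanh x ^ 2)
        (-(2 * Real.tanh r * (1 - Real.tanh r ^ 2))) r := by
      have := ((tanh_hasDerivAt r).pow 2).const_sub 1
      exact this.congr_deriv (by norm_num)
    have h2 := (hasDerivAt_id r).mul h1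
    have := (tanh_hasDerivAt r).add h2
    exact this.congr_deriv (by simp only [id_eq]; ring)
  have hD : HasDerivAt (fun x : ℝ => 2 * Real.sqrt (x * Real.tanh x))
      (2 * ((Real.tanh r + r * (1 - Real.tanh r ^ 2)) / (2 * Real.sqrt (r * Real.tanh r)))) r :=
    ((g_hasDerivAt r).sqrt (g_pos hr).ne').const_mul 2
  exact hN.div hD (by positivity)

lemma deriv2_Fsw_neg {r : ℝ} (hr : 0 < r) : deriv (deriv Fsw) r < 0 := by
  have heq : deriv Fsw =ᶠ[nhds r] Fsw1 := by
    filter_upwards [Ioi_mem_nhds hr] with x hx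
    exact deriv_Fsw_eq hx
  rw [Filter.EventuallyEq.deriv_eq heq, (Fsw1_hasDerivAt hr).deriv]
  set t := Real.tanh r with ht
  have ht0 : 0 < t := tanh_pos' hr
  have ht1 : t < 1 := tanh_lt_one' hr
  have hg : 0 < r * t := mul_pos hr ht0
  set s := Real.sqrt (r * t) with hs
  have hs0 : 0 < s := Real.sqrt_pos.2 hg
  have hs2 : s ^ 2 = r * t := Real.sq_sqrt hg.le
  rw [div_neg_iff]
  right
  constructor
  · -- numerator negative
    have key : (2 * (1 - t ^ 2) * (1 - r * t)) * (2 * (r * t)) <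
        (t + r * (1 - t ^ 2)) ^ 2 := by
      nlinarith [sq_nonneg (t - r * (1 - t ^ 2)), mul_pos (mul_pos hr hr) (mul_pos ht0 ht0),
        mul_pos (mul_pos (mul_pos hr hr) (mul_pos ht0 ht0)) (mul_pos (sub_pos.2 ht1) (by linarith : (0:ℝ) < 1 + t))]
    have hexp : (t + r * (1 - t ^ 2)) *
        (2 * ((t + r * (1 - t ^ 2)) / (2 * s))) = (t + r * (1 - t ^ 2)) ^ 2 / s := by
      field_simp
    rw [hexp, sub_neg]
    rw [lt_div_iff₀ hs0]
    calc (2 * (1 - t ^ 2) * (1 - r * t)) * (2 * s) * s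
        = (2 * (1 - t ^ 2) * (1 - r * t)) * (2 * (r * t)) := by
          linear_combination (2 * (1 - t ^ 2) * (1 - r * t) * 2) * hs2
      _ < (t + r * (1 - t ^ 2)) ^ 2 := key
  · positivity

theorem Fsw_strictConcave :
    StrictConcaveOn ℝ (Set.Ioi (0:ℝ)) Fsw ∧
      ∀ r : ℝ, 0 < r → iteratedDeriv 2 Fsw r < 0 := by
  have h2 : ∀ r : ℝ, 0 < r → iteratedDeriv 2 Fsw r < 0 := by
    intro r hr
    rw [iteratedDeriv_succ, iteratedDeriv_one]
    exact deriv2_Fsw_neg hr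
  refine ⟨?_, h2⟩
  apply strictConcaveOn_of_deriv2_neg (convex_Ioi 0)
  · exact (Real.continuous_sqrt.comp (continuous_id.mul (by
      have : Real.tanh = fun x => Real.sinh x / Real.cosh x := by
        funext x; rw [Real.tanh_eq_sinh_div_cosh]
      rw [this]
      exact Real.continuous_sinh.div Real.continuous_cosh fun x => (Real.cosh_pos x).ne'))).continuousOn
  · intro x hx
    rw [interior_Ioi] at hx
    simp only [Function.iterate_succ, Function.iterate_zero, Function.comp_apply, id_eq]
    exact deriv2_Fsw_neg hx
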